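/- Let A : ℝ_{≥0} → ℝ with A(τ,t) := A(t) − A(τ), let S_{P_L}(τ,t) be real-valued for 0 ≤ τ ≤ t, let t ≥ x ≥ 0, and suppose D(t) ≥ inf_{τ∈[0,t]}{A(τ) + S_{P_L}(τ,t)}. Then A(t−x) − D(t) ≤ max( sup_{τ∈[0,t−x]}{A(τ,t−x) − S_{P_L}(τ,t)}, sup_{τ∈[t−x,t]}{−A(t−x,τ) − S_{P_L}(τ,t)} ). -/

import Mathlib

/-- **Splitting the min-plus convolution at `τ = t−x`.**
If `D(t) ≥ inf_{τ∈[0,t]} {A(τ) + S_{P_L}(τ,t)}`, then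
`A(t−x) − D(t) ≤ max(sup_{τ∈[0,t−x]} {A(τ,t−x) − S_{P_L}(τ,t)},
sup_{τ∈[t−x,t]} {−A(t−x,τ) − S_{P_L}(τ,t)})`, where `A(τ,t) = A(t) − A(τ)`. -/
theorem minplus_split
    (A : ℝ → ℝ) (SPL : ℝ → ℝ → ℝ) (D : ℝ → ℝ)
    (t x : ℝ) (hx : 0 ≤ x) (hxt : x ≤ t)
    (hbdd : BddBelow ((fun τ => A τ + SPL τ t) '' Set.Icc 0 t))
    (hD : sInf ((fun τ => A τ + SPL τ t) '' Set.Icc 0 t) ≤ D t) :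
    A (t - x) - D t ≤
      max (sSup ((fun τ => (A (t - x) - A τ) - SPL τ t) '' Set.Icc 0 (t - x)))
          (sSup ((fun τ => -(A τ - A (t - x)) - SPL τ t) '' Set.Icc (t - x) t)) := by
  set f : ℝ → ℝ := fun τ => A τ + SPL τ t with hf
  set g : ℝ → ℝ := fun τ => A (t - x) - f τ with hg
  have htx0 : (0:ℝ) ≤ t - x := by linarith
  have htxt : t - x ≤ t := by linarith
  -- rewrite both images as images of g
  have h1 : (fun τ => (A (t - x) - A τ) - SPL τ t) = g := by
    funext τ; simp [hg, hf]; ring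
  have h2 : (fun τ => -(A τ - A (t - x)) - SPL τ t) = g := by
    funext τ; simp [hg, hf]; ring
  rw [h1, h2]
  -- bounded above of g on Icc 0 t
  obtain ⟨m, hm⟩ := hbdd
  have hbA : BddAbove (g '' Set.Icc 0 t) := by
    refine ⟨A (t - x) - m, ?_⟩
    rintro y ⟨τ, hτ, rfl⟩
    have := hm (Set.mem_image_of_mem f hτ)
    simp only [hg]; linarith
  have hb1 : BddAbove (g '' Set.Icc 0 (t - x)) :=
    hbA.mono (Set.image_mono (f := g) (Set.Icc_subset_Icc le_rfl htxt))
  have hb2 : BddAbove (g '' Set.Icc (t - x) t) :=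
    hbA.mono (Set.image_mono (f := g) (Set.Icc_subset_Icc htx0 le_rfl))
  have hmax : BddAbove (g '' Set.Icc 0 (t - x) ∪ g '' Set.Icc (t - x) t) := hb1.union hb2
  -- key: every g τ for τ ∈ Icc 0 t is ≤ max of the two sups
  have hkey : ∀ τ ∈ Set.Icc 0 t, g τ ≤
      max (sSup (g '' Set.Icc 0 (t - x))) (sSup (g '' Set.Icc (t - x) t)) := by
    intro τ hτ
    rcases le_total τ (t - x) with h | h
    · exact le_max_of_le_left (le_csSup hb1 ⟨τ, ⟨hτ.1, h⟩, rfl⟩)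
    · exact le_max_of_le_right (le_csSup hb2 ⟨τ, ⟨h, hτ.2⟩, rfl⟩)
  -- conclude: sInf f ≥ A(t-x) - max
  have hinf : A (t - x) - max (sSup (g '' Set.Icc 0 (t - x))) (sSup (g '' Set.Icc (t - x) t))
      ≤ sInf (f '' Set.Icc 0 t) := by
    apply le_csInf
    · exact ⟨f 0, Set.mem_image_of_mem f ⟨le_rfl, le_trans hx hxt⟩⟩
    · rintro y ⟨τ, hτ, rfl⟩
      have := hkey τ hτ
      simp only [hg] at this
      linarith
  linarith
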